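/- arXiv:math/0401389 — 2 statements merged into one kernel-verified Lean document; each statement's English description precedes it below -/
import Mathlib

section
/- For every n ≥ 1 and every x ∈ ℝ, f_n(x) = H̄(x) · exp(−β_{n−1}(H̄(x))), where f_0 := H̄² and f_n := T(f_{n−1}) for n ≥ 1. -/
open MeasureTheory Real Set Filter

/-- The Logistic distribution function `H(x) = 1/(1+e^{-x})`. -/
noncomputable def H (x : ℝ) : ℝ := 1 / (1 + Real.exp (-x))

/-- The tail `H̄ := 1 - H` of the Logistic distribution function. -/
noncomputable def Hbar (x : ℝ) : ℝ := 1 - H x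

lemma one_add_exp_pos (x : ℝ) : 0 < 1 + Real.exp (-x) := by positivity

lemma H_pos (x : ℝ) : 0 < H x := by unfold H; positivity

lemma H_lt_one (x : ℝ) : H x < 1 := by
  unfold H
  rw [div_lt_one (one_add_exp_pos x)]
  linarith [Real.exp_pos (-x)]

lemma Hbar_pos (x : ℝ) : 0 < Hbar x := by unfold Hbar; linarith [H_lt_one x]
lemma Hbar_lt_one (x : ℝ) : Hbar x < 1 := by unfold Hbar; linarith [H_pos x]

lemma Hbar_eq (x : ℝ) : Hbar x = Real.exp (-x) / (1 + Real.exp (-x)) := by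
  unfold Hbar H
  field_simp
  ring

lemma H_strictMono : StrictMono H := by
  intro a b hab
  unfold H
  rw [div_lt_div_iff₀ (one_add_exp_pos a) (one_add_exp_pos b)]
  have : Real.exp (-b) < Real.exp (-a) := Real.exp_lt_exp.2 (by linarith)
  linarith

lemma H_neg (x : ℝ) : H (-x) = Hbar x := by
  rw [Hbar_eq]
  unfold H
  rw [neg_neg, Real.exp_neg]
  have h : Real.exp x ≠ 0 := (Real.exp_pos x).ne'
  have h2 : 1 + Real.exp x ≠ 0 := by positivity
  field_simp
  ring

lemma hasDerivAt_H (x : ℝ) : HasDerivAt H (H x * Hbar x) x := by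
  have h1 : HasDerivAt (fun y : ℝ => 1 + Real.exp (-y)) (-Real.exp (-x)) x := by
    simpa using (((Real.hasDerivAt_exp (-x)).comp x (hasDerivAt_neg x))).const_add 1
  have h2 := h1.inv (ne_of_gt (one_add_exp_pos x))
  have hfun : H = fun y => (1 + Real.exp (-y))⁻¹ := by
    funext y; simp [H, one_div]
  have hval : H x * Hbar x = -(-Real.exp (-x)) / (1 + Real.exp (-x)) ^ 2 := by
    rw [Hbar_eq]; unfold H; field_simp
  rw [hval, hfun]
  exact h2

lemma image_H (x : ℝ) : H '' Ioi (-x) = Ioo (Hbar x) 1 := by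
  ext y
  constructor
  · rintro ⟨s, hs, rfl⟩
    exact ⟨H_neg x ▸ H_strictMono hs, H_lt_one s⟩
  · rintro ⟨h1, h2⟩
    have hy0 : 0 < y := lt_trans (Hbar_pos x) h1
    have hy1 : 0 < 1 - y := by linarith
    have ht : 0 < y / (1 - y) := div_pos hy0 hy1
    have hval : H (Real.log (y / (1 - y))) = y := by
      unfold H
      rw [Real.exp_neg, Real.exp_log ht]
      field_simp
      ring
    refine ⟨Real.log (y / (1 - y)), ?_, hval⟩
    have : H (-x) < H (Real.log (y / (1 - y))) := by rw [hval, H_neg]; exact h1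
    exact H_strictMono.lt_iff_lt.mp this

lemma key (φ : ℝ → ℝ) (x : ℝ) :
    ∫ s in Ioi (-x), Hbar s * φ (Hbar s) = ∫ w in Ioo (Hbar x) 1, φ (1 - w) / w := by
  have h := integral_image_eq_integral_abs_deriv_smul (measurableSet_Ioi (a := -x))
      (fun s _ => (hasDerivAt_H s).hasDerivWithinAt) H_strictMono.injective.injOn
      (fun w => φ (1 - w) / w)
  rw [image_H] at h
  rw [h]
  refine setIntegral_congr_fun measurableSet_Ioi fun s _ => ?_
  have h0 : H s ≠ 0 := ne_of_gt (H_pos s)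
  have hpos : 0 < H s * Hbar s := mul_pos (H_pos s) (Hbar_pos s)
  simp only [smul_eq_mul, abs_of_pos hpos]
  have : (1 : ℝ) - H s = Hbar s := rfl
  rw [this]
  field_simp


/-- The set 𝔉 of continuous, non-increasing functions `f : ℝ → [0,1]`
with `H̄(x)² ≤ f(x) ≤ H̄(x)` for all `x`. -/
def memF (f : ℝ → ℝ) : Prop :=
  (∀ x, f x ∈ Set.Icc (0:ℝ) 1) ∧ Continuous f ∧ Antitone f ∧
    ∀ x, Hbar x ^ 2 ≤ f x ∧ f x ≤ Hbar x

/-- The operator `T(f)(x) := H̄(x)² · exp(∫_{-x}^∞ f(s) ds)`. -/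
noncomputable def T (f : ℝ → ℝ) (x : ℝ) : ℝ :=
  Hbar x ^ 2 * Real.exp (∫ s in Set.Ioi (-x), f s)

/-- The recursively defined sequence of functions `β_n`:
`β₀(s) = 1 - s` and `β_n(s) = ∫_s^1 (1/w)(1 - e^{-β_{n-1}(1-w)}) dw`. -/
noncomputable def beta : ℕ → ℝ → ℝ
  | 0, s => 1 - s
  | n + 1, s => ∫ w in Set.Ioc s 1, (1 / w) * (1 - Real.exp (-(beta n (1 - w))))

noncomputable def gb (n : ℕ) (w : ℝ) : ℝ := (1 / w) * (1 - Real.exp (-(beta n (1 - w))))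

lemma beta_succ (n : ℕ) (s : ℝ) : beta (n + 1) s = ∫ w in Ioc s 1, gb n w := rfl

lemma gb_mem' (n : ℕ) (hb : ∀ s ∈ Icc (0:ℝ) 1, beta n s ∈ Icc 0 (1 - s)) :
    ∀ w ∈ Ioc (0:ℝ) 1, gb n w ∈ Icc (0:ℝ) 1 := by
  intro w hw
  have hw0 : 0 < w := hw.1
  have h1w : (1 - w) ∈ Icc (0:ℝ) 1 := ⟨by linarith [hw.2], by linarith⟩
  obtain ⟨hb0, hb1⟩ := hb (1 - w) h1w
  have hb1' : beta n (1 - w) ≤ w := by linarith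
  have he1 : Real.exp (-(beta n (1 - w))) ≤ 1 := Real.exp_le_one_iff.2 (by linarith)
  have he2 : 1 - Real.exp (-(beta n (1 - w))) ≤ w := by
    nlinarith [Real.add_one_le_exp (-(beta n (1 - w)))]
  constructor
  · exact mul_nonneg (by positivity) (by linarith)
  · have := mul_le_mul_of_nonneg_left he2 (le_of_lt (by positivity : (0:ℝ) < 1 / w))
    calc gb n w ≤ (1 / w) * w := this
      _ = 1 := by field_simp

lemma gb_cont' (n : ℕ) (hc : ContinuousOn (beta n) (Icc 0 1)) :
    ContinuousOn (gb n) (Ioc 0 1) := by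
  have c1 : ContinuousOn (fun w : ℝ => 1 / w) (Ioc 0 1) :=
    continuousOn_const.div continuousOn_id (fun w hw => ne_of_gt hw.1)
  have c2 : ContinuousOn (fun w : ℝ => beta n (1 - w)) (Ioc 0 1) :=
    hc.comp (continuous_const.sub continuous_id).continuousOn
      (fun w hw => ⟨by simp; linarith [hw.2], by simp; linarith [hw.1]⟩)
  exact c1.mul (continuousOn_const.sub (Real.continuous_exp.comp_continuousOn c2.neg))

lemma gb_int' (n : ℕ) (hc : ContinuousOn (beta n) (Icc 0 1))
    (hb : ∀ s ∈ Icc (0:ℝ) 1, beta n s ∈ Icc 0 (1 - s))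
    {s t : ℝ} (hs : 0 ≤ s) (ht : t ≤ 1) : IntegrableOn (gb n) (Ioc s t) := by
  have hsub : Ioc s t ⊆ Ioc 0 1 := Ioc_subset_Ioc hs ht
  have hmeas : AEStronglyMeasurable (gb n) (volume.restrict (Ioc s t)) :=
    ((gb_cont' n hc).mono hsub).aestronglyMeasurable measurableSet_Ioc
  refine Integrable.mono' (g := fun _ => (1:ℝ))
    (integrableOn_const measure_Ioc_lt_top.ne) hmeas ?_
  filter_upwards [ae_restrict_mem measurableSet_Ioc] with w hw
  have h := gb_mem' n hb w (hsub hw)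
  rw [Real.norm_eq_abs, abs_of_nonneg h.1]
  exact h.2

lemma gb_int_bound' (n : ℕ) (hc : ContinuousOn (beta n) (Icc 0 1))
    (hb : ∀ s ∈ Icc (0:ℝ) 1, beta n s ∈ Icc 0 (1 - s))
    {s t : ℝ} (hs : 0 ≤ s) (hst : s ≤ t) (ht : t ≤ 1) :
    (∫ w in Ioc s t, gb n w) ∈ Icc (0:ℝ) (t - s) := by
  constructor
  · refine setIntegral_nonneg measurableSet_Ioc fun w hw => ?_
    exact (gb_mem' n hb w ⟨lt_of_le_of_lt hs hw.1, hw.2.trans ht⟩).1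
  · calc (∫ w in Ioc s t, gb n w) ≤ ∫ _ in Ioc s t, (1:ℝ) := by
          refine setIntegral_mono_on (gb_int' n hc hb hs ht)
            (integrableOn_const measure_Ioc_lt_top.ne) measurableSet_Ioc
            fun w hw => ?_
          exact (gb_mem' n hb w ⟨lt_of_le_of_lt hs hw.1, hw.2.trans ht⟩).2
      _ = t - s := by
          simp [Real.volume_Ioc, ENNReal.toReal_ofReal (by linarith : (0:ℝ) ≤ t - s), hst]

lemma beta_aux (n : ℕ) : ContinuousOn (beta n) (Icc 0 1) ∧
    ∀ s ∈ Icc (0:ℝ) 1, beta n s ∈ Icc 0 (1 - s) := by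
  induction n with
  | zero =>
    constructor
    · have : beta 0 = fun s : ℝ => 1 - s := by funext s; rfl
      rw [this]
      exact (continuous_const.sub continuous_id).continuousOn
    · intro s hs
      have : beta 0 s = 1 - s := rfl
      rw [this]
      exact ⟨by linarith [hs.2], le_rfl⟩
  | succ n ih =>
    obtain ⟨ihc, ihb⟩ := ih
    have haux : ∀ s t : ℝ, s ∈ Icc (0:ℝ) 1 → t ∈ Icc (0:ℝ) 1 → s ≤ t →
        beta (n+1) t ≤ beta (n+1) s ∧ beta (n+1) s - beta (n+1) t ≤ t - s := by
      intro s t hs ht hst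
      have hsplit : beta (n+1) s = (∫ w in Ioc s t, gb n w) + ∫ w in Ioc t 1, gb n w := by
        rw [beta_succ, ← Ioc_union_Ioc_eq_Ioc hst ht.2,
          setIntegral_union (Ioc_disjoint_Ioc_of_le le_rfl) measurableSet_Ioc
            (gb_int' n ihc ihb hs.1 ht.2) (gb_int' n ihc ihb ht.1 le_rfl)]
      have hb := gb_int_bound' n ihc ihb hs.1 hst ht.2
      rw [beta_succ n t]
      constructor <;> [linarith [hb.1, hsplit]; linarith [hb.2, hsplit]]
    constructor
    · refine LipschitzOnWith.continuousOn (K := 1) ?_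
      rw [lipschitzOnWith_iff_dist_le_mul]
      intro a ha b hb
      rw [Real.dist_eq, Real.dist_eq]
      push_cast
      rw [one_mul]
      rcases le_total a b with h | h
      · have := haux a b ha hb h
        rw [abs_of_nonneg (by linarith [this.1]), abs_of_nonpos (by linarith : a - b ≤ 0)]
        linarith [this.2]
      · have := haux b a hb ha h
        rw [abs_of_nonpos (by linarith [this.1] : beta (n+1) a - beta (n+1) b ≤ 0),
          abs_of_nonneg (by linarith : 0 ≤ a - b)]
        linarith [this.2]
    · intro s hs
      rw [beta_succ]
      exact gb_int_bound' n ihc ihb hs.1 hs.2 le_rfl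

lemma beta_cont (n : ℕ) : ContinuousOn (beta n) (Icc 0 1) := (beta_aux n).1
lemma beta_mem (n : ℕ) : ∀ s ∈ Icc (0:ℝ) 1, beta n s ∈ Icc 0 (1 - s) := (beta_aux n).2


lemma int_one_div {a : ℝ} (ha : 0 < a) (ha1 : a ≤ 1) :
    ∫ w in Ioc a 1, (1:ℝ) / w = -Real.log a := by
  rw [← intervalIntegral.integral_of_le ha1]
  rw [integral_one_div (by
    rw [Set.uIcc_of_le ha1]
    intro h
    exact absurd h.1 (not_le.2 ha))]
  rw [Real.log_div one_ne_zero (ne_of_gt ha), Real.log_one]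
  ring

lemma int_one_div_integrable {a : ℝ} (ha : 0 < a) :
    IntegrableOn (fun w : ℝ => 1 / w) (Ioc a 1) := by
  have : ContinuousOn (fun w : ℝ => 1 / w) (Icc a 1) :=
    continuousOn_const.div continuousOn_id (fun w hw => ne_of_gt (lt_of_lt_of_le ha hw.1))
  exact this.integrableOn_Icc.mono_set Ioc_subset_Icc_self


/-- The iterates `f₀ := H̄²`, `f_n := T(f_{n-1})`. -/
noncomputable def fseq : ℕ → ℝ → ℝ
  | 0 => fun x => Hbar x ^ 2
  | n + 1 => T (fseq n)

lemma integral_base (x : ℝ) :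
    ∫ s in Ioi (-x), Hbar s ^ 2 = -Real.log (Hbar x) - H x := by
  have h : ∫ s in Ioi (-x), Hbar s * (fun t : ℝ => t) (Hbar s)
      = ∫ w in Ioo (Hbar x) 1, (fun t : ℝ => t) (1 - w) / w := key (fun t => t) x
  simp only [] at h
  have ha : 0 < Hbar x := Hbar_pos x
  have ha1 : Hbar x ≤ 1 := (Hbar_lt_one x).le
  have hgoal : (∫ s in Ioi (-x), Hbar s ^ 2) = ∫ s in Ioi (-x), Hbar s * Hbar s := by
    simp only [pow_two]
  rw [hgoal, h, ← integral_Ioc_eq_integral_Ioo]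
  have hcg : EqOn (fun w : ℝ => (1 - w) / w) (fun w : ℝ => 1 / w - 1) (Ioc (Hbar x) 1) := by
    intro w hw
    have hw0 : w ≠ 0 := ne_of_gt (lt_trans ha hw.1)
    field_simp
  rw [setIntegral_congr_fun measurableSet_Ioc hcg]
  rw [integral_sub (int_one_div_integrable ha) (integrableOn_const measure_Ioc_lt_top.ne)]
  rw [int_one_div ha ha1]
  have : ∫ _ in Ioc (Hbar x) 1, (1:ℝ) = 1 - Hbar x := by
    simp [Real.volume_Ioc, ENNReal.toReal_ofReal (by linarith : (0:ℝ) ≤ 1 - Hbar x), ha1]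
  rw [this]
  have : H x = 1 - Hbar x := by unfold Hbar; ring
  rw [this]

lemma integral_step (n : ℕ) (x : ℝ) :
    ∫ s in Ioi (-x), Hbar s * Real.exp (-(beta n (Hbar s)))
      = -Real.log (Hbar x) - beta (n + 1) (Hbar x) := by
  have h := key (fun t => Real.exp (-(beta n t))) x
  have ha : 0 < Hbar x := Hbar_pos x
  have ha1 : Hbar x ≤ 1 := (Hbar_lt_one x).le
  rw [h, ← integral_Ioc_eq_integral_Ioo]
  have hcg : EqOn (fun w : ℝ => Real.exp (-(beta n (1 - w))) / w)
      (fun w : ℝ => 1 / w - gb n w) (Ioc (Hbar x) 1) := by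
    intro w hw
    have hw0 : w ≠ 0 := ne_of_gt (lt_trans ha hw.1)
    unfold gb
    field_simp
    ring
  rw [setIntegral_congr_fun measurableSet_Ioc hcg]
  rw [integral_sub (int_one_div_integrable ha)
    (gb_int' n (beta_cont n) (beta_mem n) ha.le le_rfl)]
  rw [int_one_div ha ha1, beta_succ]

lemma Talg (a b : ℝ) (ha : 0 < a) :
    a ^ 2 * Real.exp (-Real.log a - b) = a * Real.exp (-b) := by
  rw [show -Real.log a - b = -Real.log a + -b by ring, Real.exp_add, Real.exp_neg,
    Real.exp_log ha]
  field_simp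

lemma main_lemma (m : ℕ) (x : ℝ) :
    fseq (m + 1) x = Hbar x * Real.exp (-(beta m (Hbar x))) := by
  induction m generalizing x with
  | zero =>
    have h1 : fseq 1 x = T (fseq 0) x := rfl
    rw [h1]
    unfold T
    have h2 : (∫ s in Ioi (-x), fseq 0 s) = -Real.log (Hbar x) - H x := by
      have : ∀ s, fseq 0 s = Hbar s ^ 2 := fun s => rfl
      simp only [this]
      exact integral_base x
    rw [h2, Talg _ _ (Hbar_pos x)]
    have : beta 0 (Hbar x) = H x := by
      have h : beta 0 (Hbar x) = 1 - Hbar x := rfl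
      rw [h]; unfold Hbar; ring
    rw [this]
  | succ m ih =>
    have h1 : fseq (m + 2) x = T (fseq (m + 1)) x := rfl
    rw [h1]
    unfold T
    have h2 : (∫ s in Ioi (-x), fseq (m + 1) s)
        = -Real.log (Hbar x) - beta (m + 1) (Hbar x) := by
      rw [setIntegral_congr_fun measurableSet_Ioi (fun s _ => ih s)]
      exact integral_step m x
    rw [h2, Talg _ _ (Hbar_pos x)]


/-- For every `n ≥ 1` and every `x ∈ ℝ`,
`f_n(x) = H̄(x) · exp(−β_{n−1}(H̄(x)))`. -/
theorem stmt5 (n : ℕ) (hn : 1 ≤ n) (x : ℝ) :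
    fseq n x = Hbar x * Real.exp (-(beta (n - 1) (Hbar x))) := by
  obtain ⟨m, rfl⟩ : ∃ m, n = m + 1 := ⟨n - 1, (Nat.succ_pred_eq_of_pos hn).symm⟩
  simp only [Nat.add_sub_cancel]
  exact main_lemma m x
end

section
/- There exists a function L : [0,1] → [0,1] with L(1) = 0 such that L(s) = lim_{n → ∞} β_n(s) for all s ∈ [0,1], and L satisfies the non-linear integral equation L(s) = ∫_s^1 (1/w)(1 − e^{−L(1−w)}) dw for all s ∈ [0,1). -/
open MeasureTheory Real Set Filter

lemma one_sub_exp_neg_le (x : ℝ) : 1 - Real.exp (-x) ≤ x := by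
  nlinarith [Real.add_one_le_exp (-x)]

lemma one_sub_exp_neg_nonneg {x : ℝ} (hx : 0 ≤ x) : 0 ≤ 1 - Real.exp (-x) := by
  have := Real.exp_le_one_iff.mpr (by linarith : -x ≤ 0)
  linarith

lemma beta_succ_of_one_le (n : ℕ) {s : ℝ} (hs : 1 ≤ s) : beta (n + 1) s = 0 := by
  show (∫ w in Set.Ioc s 1, (1 / w) * (1 - Real.exp (-(beta n (1 - w))))) = 0
  rw [Set.Ioc_eq_empty (by linarith)]
  simp

lemma beta_meas_bdd (n : ℕ) :
    Measurable (beta n) ∧ ∀ s ∈ Icc (0:ℝ) 1, 0 ≤ beta n s ∧ beta n s ≤ 1 - s := by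
  induction n with
  | zero =>
    refine ⟨measurable_const.sub measurable_id, fun s hs => ?_⟩
    show 0 ≤ 1 - s ∧ 1 - s ≤ 1 - s
    exact ⟨by linarith [hs.2], le_rfl⟩
  | succ n ih =>
    obtain ⟨hm, hb⟩ := ih
    set f : ℝ → ℝ := fun w => (1 / w) * (1 - Real.exp (-(beta n (1 - w)))) with hfdef
    have hfm : Measurable f := by
      apply Measurable.mul
      · exact measurable_const.div measurable_id
      · exact measurable_const.sub ((hm.comp (measurable_const.sub measurable_id)).neg.exp)
    set g : ℝ → ℝ := (Iic (1:ℝ)).indicator f with hgdef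
    have hgm : Measurable g := hfm.indicator measurableSet_Iic
    have hbeta : ∀ s : ℝ, beta (n + 1) s = ∫ w in Ioc s 1, g w := by
      intro s
      show (∫ w in Ioc s 1, f w) = _
      refine setIntegral_congr_fun measurableSet_Ioc (fun w hw => ?_)
      exact (indicator_of_mem (Set.mem_Iic.mpr hw.2) f).symm
    have hg01 : ∀ w ∈ Ioc (0:ℝ) 1, 0 ≤ g w ∧ g w ≤ 1 := by
      intro w hw
      have hw0 : 0 < w := hw.1
      have h1w : (1 - w) ∈ Icc (0:ℝ) 1 := ⟨by linarith [hw.2], by linarith⟩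
      obtain ⟨hb0, hb1⟩ := hb _ h1w
      have hβw : beta n (1 - w) ≤ w := by linarith
      rw [hgdef, indicator_of_mem (Set.mem_Iic.mpr hw.2)]
      constructor
      · exact mul_nonneg (by positivity) (one_sub_exp_neg_nonneg hb0)
      · have h1 : 1 - Real.exp (-(beta n (1 - w))) ≤ w :=
          (one_sub_exp_neg_le _).trans hβw
        calc (1 / w) * (1 - Real.exp (-(beta n (1 - w)))) ≤ (1 / w) * w :=
              mul_le_mul_of_nonneg_left h1 (by positivity)
          _ = 1 := by field_simp
    have hgbd : ∀ w : ℝ, |g w| ≤ Real.exp |w| := by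
      intro w
      by_cases hw1 : w ≤ 1
      · by_cases hw0 : 0 < w
        · obtain ⟨h1, h2⟩ := hg01 w ⟨hw0, hw1⟩
          rw [abs_of_nonneg h1]
          exact h2.trans (Real.one_le_exp (abs_nonneg w))
        · push_neg at hw0
          rw [hgdef, indicator_of_mem (Set.mem_Iic.mpr hw1)]
          cases n with
          | zero =>
            have hβ : beta 0 (1 - w) = w := by show 1 - (1 - w) = w; ring
            show |(1 / w) * (1 - Real.exp (-(beta 0 (1 - w))))| ≤ _
            rw [hβ]
            rcases eq_or_lt_of_le hw0 with heq | hlt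
            · subst heq; norm_num
            · have hen : 1 ≤ Real.exp (-w) := Real.one_le_exp (by linarith)
              have hk : 1 - Real.exp w ≤ -w := by
                have := one_sub_exp_neg_le (-w); simpa using this
              have he : Real.exp w * Real.exp (-w) = 1 := by
                rw [← Real.exp_add]; simp
              have key : Real.exp (-w) - 1 ≤ (-w) * Real.exp (-w) := by
                nlinarith [mul_le_mul_of_nonneg_right hk (Real.exp_pos (-w)).le]
              have hnn : 0 ≤ (1 / w) * (1 - Real.exp (-w)) := by
                have hd : (1 : ℝ) / w ≤ 0 := one_div_nonpos.mpr hlt.le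
                nlinarith

              rw [abs_of_nonneg hnn, abs_of_neg hlt]
              have hrw : (1 / w) * (1 - Real.exp (-w)) = (Real.exp (-w) - 1) / (-w) := by
                field_simp
                ring
              rw [hrw, div_le_iff₀ (by linarith : (0:ℝ) < -w)]
              linarith [key, mul_comm (Real.exp (-w)) (-w)]
          | succ m =>
            have hβ : beta (m + 1) (1 - w) = 0 := beta_succ_of_one_le m (by linarith)
            show |(1 / w) * (1 - Real.exp (-(beta (m + 1) (1 - w))))| ≤ _
            rw [hβ]
            simp only [neg_zero, Real.exp_zero, sub_self, mul_zero, abs_zero]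
            positivity
      · rw [hgdef, indicator_of_notMem (by simpa using hw1)]
        simp only [abs_zero]
        positivity
    have hgint : ∀ a b : ℝ, IntervalIntegrable g volume a b := by
      intro a b
      wlog hab : a ≤ b generalizing a b
      · exact (this b a (le_of_not_ge hab)).symm
      rw [intervalIntegrable_iff, uIoc_of_le hab]
      refine ⟨hgm.aestronglyMeasurable.restrict, ?_⟩
      apply HasFiniteIntegral.of_bounded (C := Real.exp (max |a| |b|))
      filter_upwards [ae_restrict_mem measurableSet_Ioc] with w hw
      have h1 : |w| ≤ max |a| |b| := abs_le_max_abs_abs hw.1.le hw.2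
      calc ‖g w‖ = |g w| := rfl
        _ ≤ Real.exp |w| := hgbd w
        _ ≤ Real.exp (max |a| |b|) := Real.exp_le_exp.mpr h1
    have hmeas : Measurable (beta (n + 1)) := by
      have heq : beta (n + 1) = (Iic (1:ℝ)).indicator
          (fun s => -∫ t in (1:ℝ)..s, g t) := by
        funext s
        by_cases hs : s ≤ 1
        · rw [indicator_of_mem (Set.mem_Iic.mpr hs), hbeta s,
            ← intervalIntegral.integral_of_le hs, intervalIntegral.integral_symm]
        · rw [indicator_of_notMem (by simpa using hs), hbeta s,
            Set.Ioc_eq_empty (by intro h; exact hs (by linarith))]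
          simp
      rw [heq]
      exact ((intervalIntegral.continuous_primitive hgint 1).neg.measurable).indicator
        measurableSet_Iic
    refine ⟨hmeas, fun s hs => ?_⟩
    have hsub : Ioc s 1 ⊆ Ioc 0 1 := Ioc_subset_Ioc hs.1 le_rfl
    have hint : IntegrableOn g (Ioc s 1) := by
      refine ⟨hgm.aestronglyMeasurable.restrict, ?_⟩
      apply HasFiniteIntegral.of_bounded (C := (1:ℝ))
      filter_upwards [ae_restrict_mem measurableSet_Ioc] with w hw
      have := hg01 w (hsub hw)
      rw [Real.norm_eq_abs, abs_of_nonneg this.1]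
      exact this.2
    rw [hbeta]
    constructor
    · exact setIntegral_nonneg measurableSet_Ioc (fun w hw => (hg01 w (hsub hw)).1)
    · calc (∫ w in Ioc s 1, g w) ≤ ∫ _w in Ioc s 1, (1:ℝ) :=
          setIntegral_mono_on hint
            ((integrableOn_const_iff).mpr (Or.inr measure_Ioc_lt_top)) measurableSet_Ioc
            (fun w hw => (hg01 w (hsub hw)).2)
        _ = 1 - s := by
          simp [Real.volume_Ioc, ENNReal.toReal_ofReal (by linarith [hs.2] : (0:ℝ) ≤ 1 - s), hs.2]

lemma beta_meas (n : ℕ) : Measurable (beta n) := (beta_meas_bdd n).1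

lemma beta_nonneg (n : ℕ) {s : ℝ} (hs : s ∈ Icc (0:ℝ) 1) : 0 ≤ beta n s :=
  ((beta_meas_bdd n).2 s hs).1

lemma beta_le (n : ℕ) {s : ℝ} (hs : s ∈ Icc (0:ℝ) 1) : beta n s ≤ 1 - s :=
  ((beta_meas_bdd n).2 s hs).2

lemma f_bounds (n : ℕ) {w : ℝ} (hw : w ∈ Ioc (0:ℝ) 1) :
    0 ≤ (1 / w) * (1 - Real.exp (-(beta n (1 - w)))) ∧
      (1 / w) * (1 - Real.exp (-(beta n (1 - w)))) ≤ 1 := by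
  have hw0 : 0 < w := hw.1
  have h1w : (1 - w) ∈ Icc (0:ℝ) 1 := ⟨by linarith [hw.2], by linarith⟩
  have hb0 := beta_nonneg n h1w
  have hb1 := beta_le n h1w
  have hβw : beta n (1 - w) ≤ w := by linarith
  constructor
  · exact mul_nonneg (by positivity) (one_sub_exp_neg_nonneg hb0)
  · have h1 : 1 - Real.exp (-(beta n (1 - w))) ≤ w :=
      (one_sub_exp_neg_le _).trans hβw
    calc (1 / w) * (1 - Real.exp (-(beta n (1 - w)))) ≤ (1 / w) * w :=
          mul_le_mul_of_nonneg_left h1 (by positivity)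
      _ = 1 := by field_simp

lemma f_integrableOn (n : ℕ) {s : ℝ} (hs : s ∈ Icc (0:ℝ) 1) :
    IntegrableOn (fun w => (1 / w) * (1 - Real.exp (-(beta n (1 - w))))) (Ioc s 1) := by
  have hsub : Ioc s 1 ⊆ Ioc 0 1 := Ioc_subset_Ioc hs.1 le_rfl
  have hfm : Measurable (fun w => (1 / w) * (1 - Real.exp (-(beta n (1 - w))))) := by
    apply Measurable.mul
    · exact measurable_const.div measurable_id
    · exact measurable_const.sub
        (((beta_meas n).comp (measurable_const.sub measurable_id)).neg.exp)
  refine ⟨hfm.aestronglyMeasurable.restrict, ?_⟩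
  apply HasFiniteIntegral.of_bounded (C := (1:ℝ))
  filter_upwards [ae_restrict_mem measurableSet_Ioc] with w hw
  obtain ⟨h1, h2⟩ := f_bounds n (hsub hw)
  rw [Real.norm_eq_abs, abs_of_nonneg h1]
  exact h2

lemma beta_antitone (n : ℕ) : ∀ s ∈ Icc (0:ℝ) 1, beta (n + 1) s ≤ beta n s := by
  induction n with
  | zero =>
    intro s hs
    exact (beta_le 1 hs).trans_eq rfl
  | succ n ih =>
    intro s hs
    show (∫ w in Ioc s 1, (1 / w) * (1 - Real.exp (-(beta (n + 1) (1 - w))))) ≤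
      ∫ w in Ioc s 1, (1 / w) * (1 - Real.exp (-(beta n (1 - w))))
    refine setIntegral_mono_on (f_integrableOn (n + 1) hs) (f_integrableOn n hs)
      measurableSet_Ioc (fun w hw => ?_)
    have h1w : (1 - w) ∈ Icc (0:ℝ) 1 := ⟨by linarith [hw.2], by linarith [hs.1, hw.1]⟩
    have hmono : beta (n + 1) (1 - w) ≤ beta n (1 - w) := ih _ h1w
    have hexp : Real.exp (-(beta n (1 - w))) ≤ Real.exp (-(beta (n + 1) (1 - w))) :=
      Real.exp_le_exp.mpr (by linarith)
    have hw0 : 0 < w := lt_of_le_of_lt hs.1 hw.1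
    exact mul_le_mul_of_nonneg_left (by linarith) (by positivity)

/-- There exists `L : [0,1] → [0,1]` with `L(1) = 0` such that
`L(s) = lim_n β_n(s)` for all `s ∈ [0,1]`, and `L` satisfies
`L(s) = ∫_s^1 (1/w)(1 − e^{−L(1−w)}) dw` for all `s ∈ [0,1)`. -/
theorem stmt9 :
    ∃ L : ℝ → ℝ, (∀ s ∈ Set.Icc (0:ℝ) 1, L s ∈ Set.Icc (0:ℝ) 1) ∧ L 1 = 0 ∧
      (∀ s ∈ Set.Icc (0:ℝ) 1,
        Filter.Tendsto (fun n => beta n s) Filter.atTop (nhds (L s))) ∧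
      (∀ s ∈ Set.Ico (0:ℝ) 1,
        L s = ∫ w in Set.Ioc s 1, (1 / w) * (1 - Real.exp (-(L (1 - w))))) := by
  refine ⟨fun s => ⨅ n, beta n s, ?_, ?_, ?_, ?_⟩
  · intro s hs
    constructor
    · exact le_ciInf (fun n => beta_nonneg n hs)
    · refine le_trans (ciInf_le ⟨0, ?_⟩ 0) ?_
      · rintro x ⟨n, rfl⟩
        exact beta_nonneg n hs
      · show (1:ℝ) - s ≤ 1
        linarith [hs.1]
  · have h : ∀ n, beta n (1:ℝ) = 0 := by
      intro n
      cases n with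
      | zero => show (1:ℝ) - 1 = 0; ring
      | succ m => exact beta_succ_of_one_le m le_rfl
    simp [h]
  · intro s hs
    apply tendsto_atTop_ciInf
    · exact antitone_nat_of_succ_le (fun n => beta_antitone n s hs)
    · refine ⟨0, ?_⟩
      rintro x ⟨n, rfl⟩
      exact beta_nonneg n hs
  · intro s hs
    have hs' : s ∈ Icc (0:ℝ) 1 := ⟨hs.1, hs.2.le⟩
    have htendL : ∀ t ∈ Icc (0:ℝ) 1,
        Tendsto (fun n => beta n t) atTop (nhds (⨅ n, beta n t)) := by
      intro t ht
      apply tendsto_atTop_ciInf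
      · exact antitone_nat_of_succ_le (fun n => beta_antitone n t ht)
      · refine ⟨0, ?_⟩
        rintro x ⟨n, rfl⟩
        exact beta_nonneg n ht
    have h1 : Tendsto (fun n => beta (n + 1) s) atTop (nhds (⨅ n, beta n s)) :=
      (htendL s hs').comp (tendsto_add_atTop_nat 1)
    have h2 : Tendsto (fun n => beta (n + 1) s) atTop
        (nhds (∫ w in Ioc s 1, (1 / w) * (1 - Real.exp (-(⨅ n, beta n (1 - w)))))) := by
      have : ∀ n : ℕ, beta (n + 1) s =
          ∫ w in Ioc s 1, (1 / w) * (1 - Real.exp (-(beta n (1 - w)))) := fun n => rfl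
      simp_rw [this]
      apply tendsto_integral_of_dominated_convergence (bound := fun _ => (1:ℝ))
      · intro n
        exact (f_integrableOn n hs').1
      · exact integrable_const 1
      · intro n
        filter_upwards [ae_restrict_mem measurableSet_Ioc] with w hw
        have hsub : Ioc s 1 ⊆ Ioc 0 1 := Ioc_subset_Ioc hs.1 le_rfl
        obtain ⟨ha, hb⟩ := f_bounds n (hsub hw)
        rw [Real.norm_eq_abs, abs_of_nonneg ha]
        exact hb
      · filter_upwards [ae_restrict_mem measurableSet_Ioc] with w hw
        have h1w : (1 - w) ∈ Icc (0:ℝ) 1 := ⟨by linarith [hw.2], by linarith [hs.1, hw.1]⟩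
        have hbt : Tendsto (fun n => beta n (1 - w)) atTop
            (nhds (⨅ n, beta n (1 - w))) := htendL _ h1w
        have hexp : Tendsto (fun n => Real.exp (-(beta n (1 - w)))) atTop
            (nhds (Real.exp (-(⨅ n, beta n (1 - w))))) :=
          (Real.continuous_exp.tendsto _).comp hbt.neg
        exact (tendsto_const_nhds.sub hexp).const_mul _
    exact tendsto_nhds_unique h1 h2
end
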